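/- Under the bandwagon rating process, the expected squared error of the sample mean has the closed form E[(p̄_n - p)²] = p(1-p) · ( 1/n² + Σ_{i=1}^{n-1} (1/i²) · Π_{j=i+1}^{n} ((j-1)(j+1-2λ_j)/j²) ). -/

import Mathlib

open MeasureTheory ProbabilityTheory Finset Filter

/-- Sample mean of the first `n` ratings (ratings are indexed from 1). -/
noncomputable def pbar {Ω : Type*} (r : ℕ → Ω → ℝ) (n : ℕ) (ω : Ω) : ℝ :=
  (∑ i ∈ Finset.Icc 1 n, r i ω) / n

/-- σ-algebra generated by the first `n` ratings. -/
def ratingsAlg {Ω : Type*} (r : ℕ → Ω → ℝ) (n : ℕ) : MeasurableSpace Ω :=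
  ⨆ i ∈ Finset.Icc 1 n, MeasurableSpace.comap (r i) (inferInstance : MeasurableSpace ℝ)

/-- The bandwagon rating process of Xie et al., as used in the paper. -/
structure Bandwagon {Ω : Type*} [MeasurableSpace Ω] (μ : Measure Ω)
    (p : ℝ) (lam : ℕ → ℝ) (r : ℕ → Ω → ℝ) : Prop where
  prob : IsProbabilityMeasure μ
  hp : 0 < p ∧ p < 1
  hlam1 : lam 1 = 1
  hlam_nonneg : ∀ n, 1 ≤ n → 0 ≤ lam n
  hlam_mono : ∀ n, 2 ≤ n → lam n ≤ lam (n - 1)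
  hmeas : ∀ n, Measurable (r n)
  hbin : ∀ n, 1 ≤ n → ∀ ω, r n ω = 0 ∨ r n ω = 1
  hfirst : ∫ ω, r 1 ω ∂μ = p
  hcond : ∀ n, 2 ≤ n →
    μ[r n | ratingsAlg r (n - 1)] =ᵐ[μ]
      fun ω => lam n * p + (1 - lam n) * pbar r (n - 1) ω

/-- Affine-corrected rating `r̂ᵢ`. -/
noncomputable def rhat {Ω : Type*} (r : ℕ → Ω → ℝ) (lam : ℕ → ℝ) (i : ℕ) (ω : Ω) : ℝ :=
  (r i ω - (1 - lam i) * pbar r (i - 1) ω) / lam i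

section Aux
variable {Ω : Type*} [MeasurableSpace Ω] {μ : Measure Ω} {p : ℝ} {lam : ℕ → ℝ} {r : ℕ → Ω → ℝ}

lemma bw_r_nonneg (hbw : Bandwagon μ p lam r) {n : ℕ} (hn : 1 ≤ n) (ω : Ω) : 0 ≤ r n ω := by
  rcases hbw.hbin n hn ω with h | h <;> simp [h]

lemma bw_r_le_one (hbw : Bandwagon μ p lam r) {n : ℕ} (hn : 1 ≤ n) (ω : Ω) : r n ω ≤ 1 := by
  rcases hbw.hbin n hn ω with h | h <;> simp [h]

lemma bw_pbar_meas (hbw : Bandwagon μ p lam r) (n : ℕ) : Measurable (pbar r n) := by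
  unfold pbar
  exact (Finset.measurable_sum _ fun i _ => hbw.hmeas i).div_const _

lemma bw_pbar_nonneg (hbw : Bandwagon μ p lam r) (n : ℕ) (ω : Ω) : 0 ≤ pbar r n ω :=
  div_nonneg (Finset.sum_nonneg fun i hi => bw_r_nonneg hbw (Finset.mem_Icc.mp hi).1 ω)
    (Nat.cast_nonneg n)

lemma bw_pbar_le_one (hbw : Bandwagon μ p lam r) (n : ℕ) (ω : Ω) : pbar r n ω ≤ 1 := by
  rcases Nat.eq_zero_or_pos n with h | h
  · simp [pbar, h]
  · apply div_le_one_of_le₀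
    · calc ∑ i ∈ Finset.Icc 1 n, r i ω ≤ ∑ i ∈ Finset.Icc 1 n, 1 :=
            Finset.sum_le_sum fun i hi => bw_r_le_one hbw (Finset.mem_Icc.mp hi).1 ω
        _ = (n : ℝ) := by simp
    · exact Nat.cast_nonneg n

lemma bw_integrable (hbw : Bandwagon μ p lam r) {f : Ω → ℝ} (hf : Measurable f) (C : ℝ)
    (hC : ∀ ω, |f ω| ≤ C) : Integrable f μ := by
  haveI := hbw.prob
  exact (integrable_const C).mono' hf.aestronglyMeasurable (Filter.Eventually.of_forall hC)

lemma bw_ratingsAlg_le (hbw : Bandwagon μ p lam r) (n : ℕ) :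
    ratingsAlg r n ≤ (inferInstance : MeasurableSpace Ω) := by
  apply iSup₂_le
  intro i _
  exact measurable_iff_comap_le.mp (hbw.hmeas i)

lemma bw_r_meas_alg {n i : ℕ} (hi : i ∈ Finset.Icc 1 n) :
    Measurable[ratingsAlg r n] (r i) := by
  apply measurable_iff_comap_le.mpr
  exact le_iSup₂ (f := fun i (_ : i ∈ Finset.Icc 1 n) =>
    MeasurableSpace.comap (r i) (inferInstance : MeasurableSpace ℝ)) i hi

lemma bw_pbar_meas_alg (n : ℕ) : Measurable[ratingsAlg r n] (pbar r n) := by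
  unfold pbar
  exact (Finset.measurable_sum _ fun i hi => bw_r_meas_alg hi).div_const _

lemma bw_r_abs_le (hbw : Bandwagon μ p lam r) {n : ℕ} (hn : 1 ≤ n) (ω : Ω) : |r n ω| ≤ 1 :=
  abs_le.mpr ⟨by linarith [bw_r_nonneg hbw hn ω], bw_r_le_one hbw hn ω⟩

lemma bw_r_int (hbw : Bandwagon μ p lam r) {n : ℕ} (hn : 1 ≤ n) : Integrable (r n) μ :=
  bw_integrable hbw (hbw.hmeas n) 1 (bw_r_abs_le hbw hn)

lemma bw_pbar_abs_le (hbw : Bandwagon μ p lam r) (n : ℕ) (ω : Ω) : |pbar r n ω| ≤ 1 :=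
  abs_le.mpr ⟨by linarith [bw_pbar_nonneg hbw n ω], bw_pbar_le_one hbw n ω⟩

lemma bw_integral_pbar (hbw : Bandwagon μ p lam r) {m : ℕ} (hm : 1 ≤ m)
    (h : ∀ i, 1 ≤ i → i ≤ m → ∫ ω, r i ω ∂μ = p) : ∫ ω, pbar r m ω ∂μ = p := by
  have hint : ∀ i ∈ Finset.Icc 1 m, Integrable (r i) μ := fun i hi =>
    bw_r_int hbw (Finset.mem_Icc.mp hi).1
  have hm0 : (m : ℝ) ≠ 0 := Nat.cast_ne_zero.mpr (by omega)
  calc ∫ ω, pbar r m ω ∂μ = (∫ ω, ∑ i ∈ Finset.Icc 1 m, r i ω ∂μ) / m := by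
        unfold pbar; rw [integral_div]
    _ = (∑ i ∈ Finset.Icc 1 m, ∫ ω, r i ω ∂μ) / m := by rw [integral_finset_sum _ hint]
    _ = (∑ i ∈ Finset.Icc 1 m, p) / m := by
        congr 1
        exact Finset.sum_congr rfl fun i hi =>
          h i (Finset.mem_Icc.mp hi).1 (Finset.mem_Icc.mp hi).2
    _ = p := by
        rw [Finset.sum_const, Nat.card_Icc]
        simp only [nsmul_eq_mul]
        field_simp
        rw [Nat.add_sub_cancel]; ring

lemma bw_mean_r (hbw : Bandwagon μ p lam r) : ∀ n, 1 ≤ n → ∫ ω, r n ω ∂μ = p := by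
  intro n
  induction n using Nat.strong_induction_on with
  | _ n ih =>
    intro hn
    rcases eq_or_lt_of_le hn with h1 | h2
    · rw [← h1]; exact hbw.hfirst
    · have h2 : 2 ≤ n := h2
      haveI := hbw.prob
      have hm := bw_ratingsAlg_le hbw (n - 1)
      haveI : SigmaFinite (μ.trim hm) := by
        exact @IsFiniteMeasure.toSigmaFinite _ _ _ (isFiniteMeasure_trim hm)
      have hmean : ∫ ω, pbar r (n - 1) ω ∂μ = p :=
        bw_integral_pbar hbw (by omega) fun i hi hi' => ih i (by omega) hi
      calc ∫ ω, r n ω ∂μ = ∫ ω, (μ[r n | ratingsAlg r (n - 1)]) ω ∂μ :=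
            (integral_condExp hm).symm
        _ = ∫ ω, (lam n * p + (1 - lam n) * pbar r (n - 1) ω) ∂μ :=
            integral_congr_ae (hbw.hcond n h2)
        _ = lam n * p + (1 - lam n) * ∫ ω, pbar r (n - 1) ω ∂μ := by
            rw [integral_add (integrable_const _), integral_const, integral_const_mul]
            · simp
            · exact (bw_integrable hbw ((bw_pbar_meas hbw _).const_mul _) |1 - lam n|
                (fun ω => by
                  rw [abs_mul]
                  exact mul_le_of_le_one_right (abs_nonneg _) (bw_pbar_abs_le hbw _ ω)))
        _ = p := by rw [hmean]; ring

lemma bw_mean_pbar (hbw : Bandwagon μ p lam r) {m : ℕ} (hm : 1 ≤ m) :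
    ∫ ω, pbar r m ω ∂μ = p :=
  bw_integral_pbar hbw hm fun i hi _ => bw_mean_r hbw i hi

lemma bw_sq (hbw : Bandwagon μ p lam r) {n : ℕ} (hn : 1 ≤ n) :
    ∫ ω, (r n ω - p) ^ 2 ∂μ = p * (1 - p) := by
  haveI := hbw.prob
  have key : ∀ ω, (r n ω - p) ^ 2 = (1 - 2 * p) * r n ω + p ^ 2 := by
    intro ω
    rcases hbw.hbin n hn ω with h | h <;> rw [h] <;> ring
  rw [integral_congr_ae (Filter.Eventually.of_forall key),
    integral_add ((bw_r_int hbw hn).const_mul _) (integrable_const _),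
    integral_const_mul, bw_mean_r hbw n hn, integral_const]
  simp
  ring

lemma bw_cross (hbw : Bandwagon μ p lam r) {n : ℕ} (h2 : 2 ≤ n) {f : Ω → ℝ}
    (hf : Measurable[ratingsAlg r (n - 1)] f) (hfb : ∀ ω, |f ω| ≤ 2) :
    ∫ ω, f ω * r n ω ∂μ
      = ∫ ω, f ω * (lam n * p + (1 - lam n) * pbar r (n - 1) ω) ∂μ := by
  haveI := hbw.prob
  have hm := bw_ratingsAlg_le hbw (n - 1)
  haveI : SigmaFinite (μ.trim hm) :=
    @IsFiniteMeasure.toSigmaFinite _ _ _ (isFiniteMeasure_trim hm)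
  have hfmeas : Measurable f := hf.mono hm le_rfl
  have hrint : Integrable (r n) μ := bw_r_int hbw (by omega)
  have hfr : Integrable (f * r n) μ := by
    apply bw_integrable hbw (hfmeas.mul (hbw.hmeas n)) 2
    intro ω
    simp only [Pi.mul_apply, abs_mul]
    calc |f ω| * |r n ω| ≤ |f ω| * 1 :=
          mul_le_mul_of_nonneg_left (bw_r_abs_le hbw (by omega) ω) (abs_nonneg _)
      _ ≤ 2 := by simpa using hfb ω
  have h1 : μ[f * r n | ratingsAlg r (n - 1)] =ᵐ[μ] f * μ[r n | ratingsAlg r (n - 1)] :=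
    condExp_mul_of_stronglyMeasurable_left hf.stronglyMeasurable hfr hrint
  have h3 : f * μ[r n | ratingsAlg r (n - 1)] =ᵐ[μ]
      fun ω => f ω * (lam n * p + (1 - lam n) * pbar r (n - 1) ω) := by
    filter_upwards [hbw.hcond n h2] with ω hω
    simp [hω]
  calc ∫ ω, f ω * r n ω ∂μ = ∫ ω, (f * r n) ω ∂μ := rfl
    _ = ∫ ω, (μ[f * r n | ratingsAlg r (n - 1)]) ω ∂μ := (integral_condExp hm).symm
    _ = ∫ ω, f ω * (lam n * p + (1 - lam n) * pbar r (n - 1) ω) ∂μ :=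
        integral_congr_ae (h1.trans h3)

lemma bw_var_rec (hbw : Bandwagon μ p lam r) {m : ℕ} (hm : 1 ≤ m) :
    ∫ ω, (pbar r (m + 1) ω - p) ^ 2 ∂μ
      = ((m : ℝ) * ((m : ℝ) + 2 - 2 * lam (m + 1)) / ((m : ℝ) + 1) ^ 2)
          * ∫ ω, (pbar r m ω - p) ^ 2 ∂μ
        + p * (1 - p) / ((m : ℝ) + 1) ^ 2 := by
  haveI := hbw.prob
  set g : Ω → ℝ := fun ω => pbar r m ω - p with hg
  have hpabs : |p| ≤ 1 := abs_le.mpr ⟨by linarith [hbw.hp.1], le_of_lt hbw.hp.2⟩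
  have hgb : ∀ ω, |g ω| ≤ 2 := fun ω => by
    calc |g ω| ≤ |pbar r m ω| + |p| := abs_sub _ _
      _ ≤ 2 := by linarith [bw_pbar_abs_le hbw m ω]
  have hgmeas : Measurable g := (bw_pbar_meas hbw m).sub measurable_const
  have hgalg : Measurable[ratingsAlg r m] g :=
    (bw_pbar_meas_alg m).sub measurable_const
  have hm0 : (m : ℝ) ≠ 0 := Nat.cast_ne_zero.mpr (by omega)
  -- pointwise decomposition
  have key : ∀ ω, (pbar r (m + 1) ω - p) ^ 2
      = ((m : ℝ) ^ 2 * g ω ^ 2 + 2 * m * (g ω * (r (m + 1) ω - p))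
          + (r (m + 1) ω - p) ^ 2) / ((m : ℝ) + 1) ^ 2 := by
    intro ω
    have hsum : pbar r (m + 1) ω = ((m : ℝ) * pbar r m ω + r (m + 1) ω) / ((m : ℝ) + 1) := by
      unfold pbar
      rw [Finset.sum_Icc_succ_top (by omega : 1 ≤ m + 1)]
      have : (m : ℝ) * ((∑ i ∈ Finset.Icc 1 m, r i ω) / m) = ∑ i ∈ Finset.Icc 1 m, r i ω := by
        field_simp
      rw [this]
      push_cast
      ring
    rw [hsum, hg]
    have h1 : (m : ℝ) + 1 ≠ 0 := by positivity
    field_simp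
    ring
  -- integrability of pieces
  have hrn1 : Integrable (r (m + 1)) μ := bw_r_int hbw (by omega)
  have ig2 : Integrable (fun ω => g ω ^ 2) μ := by
    apply bw_integrable hbw (hgmeas.pow_const 2) 4
    intro ω
    rw [abs_pow]
    nlinarith [hgb ω, abs_nonneg (g ω)]
  have igr : Integrable (fun ω => g ω * (r (m + 1) ω - p)) μ := by
    apply bw_integrable hbw (hgmeas.mul ((hbw.hmeas _).sub measurable_const)) 4
    intro ω
    simp only [Pi.mul_apply, Pi.sub_apply, abs_mul]
    have : |r (m + 1) ω - p| ≤ 2 := by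
      calc |r (m + 1) ω - p| ≤ |r (m + 1) ω| + |p| := abs_sub _ _
        _ ≤ 2 := by linarith [bw_r_abs_le hbw (by omega : 1 ≤ m + 1) ω]
    calc |g ω| * |r (m + 1) ω - p| ≤ 2 * 2 :=
          mul_le_mul (hgb ω) this (abs_nonneg _) (by norm_num)
      _ = 4 := by norm_num
  have irp2 : Integrable (fun ω => (r (m + 1) ω - p) ^ 2) μ := by
    apply bw_integrable hbw (((hbw.hmeas _).sub measurable_const).pow_const 2) 9
    intro ω
    rw [abs_pow]
    have : |r (m + 1) ω - p| ≤ 3 := by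
      calc |r (m + 1) ω - p| ≤ |r (m + 1) ω| + |p| := abs_sub _ _
        _ ≤ 3 := by linarith [bw_r_abs_le hbw (by omega : 1 ≤ m + 1) ω]
    calc |r (m + 1) ω - p| ^ 2 ≤ 3 ^ 2 := by
          apply pow_le_pow_left₀ (abs_nonneg _) this
      _ = 9 := by norm_num
  -- mean of g is 0
  have hgmean : ∫ ω, g ω ∂μ = 0 := by
    rw [hg]
    rw [integral_sub (bw_integrable hbw (bw_pbar_meas hbw m) 1 (bw_pbar_abs_le hbw m))
      (integrable_const _), bw_mean_pbar hbw hm, integral_const]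
    simp
  have hgint : Integrable g μ := bw_integrable hbw hgmeas 2 hgb
  -- cross term
  have hcross : ∫ ω, g ω * (r (m + 1) ω - p) ∂μ
      = (1 - lam (m + 1)) * ∫ ω, g ω ^ 2 ∂μ := by
    have e1 : ∀ ω, g ω * (r (m + 1) ω - p) = g ω * r (m + 1) ω - p * g ω := by
      intro ω; ring
    have igrn : Integrable (fun ω => g ω * r (m + 1) ω) μ := by
      apply bw_integrable hbw (hgmeas.mul (hbw.hmeas _)) 2
      intro ω
      simp only [Pi.mul_apply, abs_mul]
      exact le_trans (mul_le_of_le_one_right (abs_nonneg _)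
        (bw_r_abs_le hbw (by omega : 1 ≤ m + 1) ω)) (hgb ω)
    rw [integral_congr_ae (Filter.Eventually.of_forall e1),
      integral_sub igrn (hgint.const_mul p), integral_const_mul, hgmean, mul_zero, sub_zero]
    have hc2 : (2 : ℕ) ≤ m + 1 := by omega
    have := bw_cross hbw hc2 (f := g) (by simpa using hgalg) hgb
    simp only [Nat.add_sub_cancel] at this
    rw [this]
    have e2 : ∀ ω, g ω * (lam (m + 1) * p + (1 - lam (m + 1)) * pbar r m ω)
        = (lam (m + 1) * p + (1 - lam (m + 1)) * p) * g ω + (1 - lam (m + 1)) * g ω ^ 2 := by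
      intro ω
      simp only [hg]
      ring
    rw [integral_congr_ae (Filter.Eventually.of_forall e2),
      integral_add ((hgint.const_mul _)) (ig2.const_mul _),
      integral_const_mul, integral_const_mul, hgmean, mul_zero, zero_add]
  -- squared term
  have hsq : ∫ ω, (r (m + 1) ω - p) ^ 2 ∂μ = p * (1 - p) := bw_sq hbw (by omega)
  -- put it together
  rw [integral_congr_ae (Filter.Eventually.of_forall key)]
  have iA : Integrable (fun ω => (m : ℝ) ^ 2 * g ω ^ 2
      + 2 * (m : ℝ) * (g ω * (r (m + 1) ω - p))) μ :=
    (ig2.const_mul _).add (igr.const_mul _)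
  rw [integral_div, integral_add iA irp2,
    integral_add (ig2.const_mul _) (igr.const_mul _), integral_const_mul, integral_const_mul,
    hcross, hsq]
  have h1 : ((m : ℝ) + 1) ≠ 0 := by positivity
  field_simp
  ring

end Aux

theorem bandwagon_efficiency_closed_form {Ω : Type*} [MeasurableSpace Ω] (μ : MeasureTheory.Measure Ω)
    (p : ℝ) (lam : ℕ → ℝ) (r : ℕ → Ω → ℝ)
    (hbw : Bandwagon μ p lam r) :
    ∀ n, 1 ≤ n →
      ∫ ω, (pbar r n ω - p) ^ 2 ∂μ
        = p * (1 - p) *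
            (1 / (n : ℝ) ^ 2 +
              ∑ i ∈ Finset.Icc 1 (n - 1), (1 / (i : ℝ) ^ 2) *
                ∏ j ∈ Finset.Icc (i + 1) n,
                  ((j : ℝ) - 1) * ((j : ℝ) + 1 - 2 * lam j) / (j : ℝ) ^ 2) := by
  intro n hn
  induction n, hn using Nat.le_induction with
  | base =>
    have hpt : ∀ ω, (pbar r 1 ω - p) ^ 2 = (r 1 ω - p) ^ 2 := by
      intro ω; simp [pbar]
    rw [integral_congr_ae (Filter.Eventually.of_forall hpt), bw_sq hbw le_rfl]
    norm_num
  | succ n hn ih =>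
    obtain ⟨k, rfl⟩ : ∃ k, n = k + 1 := ⟨n - 1, by omega⟩
    simp only [Nat.add_sub_cancel] at ih ⊢
    rw [bw_var_rec hbw (by omega : 1 ≤ k + 1), ih]
    have hsplit : ∑ i ∈ Finset.Icc 1 (k + 1), (1 / (i : ℝ) ^ 2) *
          ∏ j ∈ Finset.Icc (i + 1) (k + 1 + 1),
            ((j : ℝ) - 1) * ((j : ℝ) + 1 - 2 * lam j) / (j : ℝ) ^ 2
        = (∑ i ∈ Finset.Icc 1 k, (1 / (i : ℝ) ^ 2) *
            ∏ j ∈ Finset.Icc (i + 1) (k + 1),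
              ((j : ℝ) - 1) * ((j : ℝ) + 1 - 2 * lam j) / (j : ℝ) ^ 2)
            * ((((k + 1 + 1 : ℕ) : ℝ) - 1) * (((k + 1 + 1 : ℕ) : ℝ) + 1 - 2 * lam (k + 1 + 1))
              / ((k + 1 + 1 : ℕ) : ℝ) ^ 2)
          + (1 / (((k + 1 : ℕ)) : ℝ) ^ 2) *
            ((((k + 1 + 1 : ℕ) : ℝ) - 1) * (((k + 1 + 1 : ℕ) : ℝ) + 1 - 2 * lam (k + 1 + 1))
              / ((k + 1 + 1 : ℕ) : ℝ) ^ 2) := by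
      rw [Finset.sum_Icc_succ_top (by omega : 1 ≤ k + 1)]
      congr 1
      · rw [Finset.sum_mul]
        apply Finset.sum_congr rfl
        intro i hi
        rw [Finset.prod_Icc_succ_top (by have := (Finset.mem_Icc.mp hi).2; omega : i + 1 ≤ k + 1 + 1)]
        ring
      · rw [show Finset.Icc (k + 1 + 1) (k + 1 + 1) = {k + 1 + 1} from Finset.Icc_self _,
          Finset.prod_singleton]
    rw [hsplit]
    have hx : ((k : ℝ) + 1) ≠ 0 := by positivity
    have hy : ((k : ℝ) + 2) ≠ 0 := by positivity
    push_cast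
    field_simp
    ring
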